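/- Let X be a compact metric space, f : X → X continuous, and X̄ the inverse limit with induced homeomorphism f̄. Suppose there exist l ∈ ℕ and ε > 0 such that for all x, y ∈ X with f^l(x) ≠ f^l(y) there is K ≥ 0 with d(f^K(x), f^K(y)) ≥ ε. Then f̄ is expansive on X̄ with the metric d̄(x,y) = Σ d(x_i,y_i)/2^i, i.e. there exists ε' > 0 such that for all distinct x, y ∈ X̄ there exists n ∈ ℤ with d̄(f̄^n(x), f̄^n(y)) ≥ ε'. -/
import Mathlib


/-- The inverse limit of a self-map `f : X → X`. -/
def InvLim {X : Type*} (f : X → X) : Type _ :=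
  {x : ℕ → X // ∀ n, f (x (n + 1)) = x n}

/-- The shift homeomorphism (as a bijection) `f̄(x₀,x₁,…) = (f(x₀),x₀,x₁,…)`
on the inverse limit, with inverse `(x₀,x₁,…) ↦ (x₁,x₂,…)`. -/
def shiftEquiv {X : Type*} (f : X → X) : Equiv.Perm (InvLim f) where
  toFun x := ⟨fun n => Nat.casesOn n (f (x.1 0)) (fun k => x.1 k), by
    intro n
    cases n with
    | zero => rfl
    | succ k => exact x.2 k⟩
  invFun x := ⟨fun n => x.1 (n + 1), fun n => x.2 (n + 1)⟩
  left_inv x := Subtype.ext (funext fun _ => rfl)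
  right_inv x := Subtype.ext (funext fun n => by
    cases n with
    | zero => exact x.2 0
    | succ k => rfl)

/-- The metric `d̄(x,y) = Σ d(x_i,y_i)/2^i` on the inverse limit. -/
noncomputable def Dbar {X : Type*} [PseudoMetricSpace X] (f : X → X)
    (x y : InvLim f) : ℝ :=
  ∑' i : ℕ, dist (x.1 i) (y.1 i) / 2 ^ i

lemma coord0_pow {X : Type*} (f : X → X) (n : ℕ) (x : InvLim f) :
    ((shiftEquiv f ^ n) x).1 0 = f^[n] (x.1 0) := by
  induction n generalizing x with
  | zero => rfl
  | succ k ih =>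
    rw [pow_succ, Equiv.Perm.mul_apply, ih]
    show f^[k] (f (x.1 0)) = f^[k+1] (x.1 0)
    rw [Function.iterate_succ_apply]

lemma coord_invpow {X : Type*} (f : X → X) (m : ℕ) (x : InvLim f) (i : ℕ) :
    (((shiftEquiv f)⁻¹ ^ m) x).1 i = x.1 (i + m) := by
  induction m generalizing x i with
  | zero => rfl
  | succ k ih =>
    rw [pow_succ', Equiv.Perm.mul_apply]
    show (((shiftEquiv f)⁻¹ ^ k) x).1 (i + 1) = x.1 (i + (k + 1))
    rw [ih, show i + 1 + k = i + (k + 1) from by omega]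

lemma back_iter {X : Type*} (f : X → X) (x : InvLim f) (j k : ℕ) :
    x.1 j = f^[k] (x.1 (j + k)) := by
  induction k with
  | zero => rfl
  | succ k ih =>
    show x.1 j = f^[k + 1] (x.1 (j + k + 1))
    rw [Function.iterate_succ_apply, x.2 (j + k)]
    exact ih

theorem stmt2 {X : Type*} [MetricSpace X] [CompactSpace X]
    (f : X → X) (hf : Continuous f) (hfs : Function.Surjective f)
    (l : ℕ) (ε : ℝ) (hε : 0 < ε)
    (hexp : ∀ x y : X, f^[l] x ≠ f^[l] y → ∃ K : ℕ, ε ≤ dist (f^[K] x) (f^[K] y)) :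
    ∃ ε' > (0 : ℝ), ∀ x y : InvLim f, x ≠ y →
      ∃ n : ℤ, ε' ≤ Dbar f ((shiftEquiv f ^ n) x) ((shiftEquiv f ^ n) y) := by
  -- bound on distances
  obtain ⟨C, hC⟩ : ∃ C, ∀ a b : X, dist a b ≤ C := by
    obtain ⟨C, hC⟩ := Metric.isBounded_iff.mp (isCompact_univ : IsCompact (Set.univ : Set X)).isBounded
    exact ⟨C, fun a b => hC (Set.mem_univ a) (Set.mem_univ b)⟩
  have hD : ∀ x y : InvLim f, dist (x.1 0) (y.1 0) ≤ Dbar f x y := by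
    intro x y
    have hs : Summable (fun i : ℕ => dist (x.1 i) (y.1 i) / 2 ^ i) := by
      refine Summable.of_nonneg_of_le (fun i => by positivity) (fun i => ?_)
        ((summable_geometric_two).mul_left C)
      rw [div_pow, one_pow, mul_one_div]
      gcongr
      exact hC _ _
    have h0 := Summable.le_tsum hs 0 (fun j _ => by positivity)
    simpa [Dbar] using h0
  refine ⟨ε, hε, fun x y hxy => ?_⟩
  obtain ⟨m, hm⟩ : ∃ m, x.1 m ≠ y.1 m := by
    by_contra h
    push_neg at h
    exact hxy (Subtype.ext (funext h))
  have hne : f^[l] (x.1 (m + l)) ≠ f^[l] (y.1 (m + l)) := by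
    rw [← back_iter f x m l, ← back_iter f y m l]
    exact hm
  obtain ⟨K, hK⟩ := hexp _ _ hne
  refine ⟨(K : ℤ) - (m + l : ℕ), ?_⟩
  have hzpow : ∀ z : InvLim f,
      ((shiftEquiv f ^ ((K : ℤ) - (m + l : ℕ))) z).1 0 = f^[K] (z.1 (m + l)) := by
    intro z
    have h1 : (shiftEquiv f ^ ((K : ℤ) - (m + l : ℕ))) =
        (shiftEquiv f) ^ K * ((shiftEquiv f)⁻¹) ^ (m + l) := by
      rw [sub_eq_add_neg, zpow_add, zpow_natCast, zpow_neg, zpow_natCast, inv_pow]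
    rw [h1, Equiv.Perm.mul_apply, coord0_pow, coord_invpow, Nat.zero_add]
  calc ε ≤ dist (f^[K] (x.1 (m + l))) (f^[K] (y.1 (m + l))) := hK
    _ = dist (((shiftEquiv f ^ ((K : ℤ) - (m + l : ℕ))) x).1 0)
        (((shiftEquiv f ^ ((K : ℤ) - (m + l : ℕ))) y).1 0) := by rw [hzpow, hzpow]
    _ ≤ _ := hD _ _
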